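/- Fix $d\ge1$ and $\alpha>d$, and fix $\eta\in\mathbb{R}$. Let $\hat r_t$ maximize $f_t(r)=r^{d/\alpha}(\log r)^{1/\alpha}(\log\log r)^{1/\alpha}(\log\log\log r)^{1/\alpha+\eta}-\frac{r}{t}\log\frac{r}{2det}$ over $r>0$. Then as $t\to\infty$, $\log f_t(\hat r_t)=\frac{d}{\alpha-d}\log t-\frac{d-1}{\alpha-d}\log\log t+\frac{1}{\alpha-d}(\log\log\log t)(1+o(1))$, independently of $\eta$. -/

import Mathlib

open Filter

namespace PA

lemma log_le_self {x : ℝ} (hx : 0 < x) : Real.log x ≤ x := by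
  have := Real.log_le_sub_one_of_pos hx; linarith

lemma abs_log_le_rpow {x c : ℝ} (hx : 0 < x) (hc : 0 < c) :
    |Real.log x| ≤ (x ^ c + x ^ (-c)) / c := by
  have h1 : Real.log x ≤ x ^ c / c := Real.log_le_rpow_div hx.le hc
  have h2 : Real.log x⁻¹ ≤ (x⁻¹) ^ c / c := Real.log_le_rpow_div (by positivity) hc
  rw [Real.log_inv, Real.inv_rpow hx.le, ← Real.rpow_neg hx.le] at h2
  have hsplit : (x ^ c + x ^ (-c)) / c = x ^ c / c + x ^ (-c) / c := add_div _ _ _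
  have hp' : (0:ℝ) ≤ x ^ c / c := by positivity
  have hn' : (0:ℝ) ≤ x ^ (-c) / c := by positivity
  rw [abs_le]; constructor <;> linarith

lemma rpow_add_le_two_rpow {p q e : ℝ} (hp : 0 ≤ p) (hq : 0 ≤ q) (he : 0 ≤ e) :
    (p + q) ^ e ≤ 2 ^ e * (p ^ e + q ^ e) := by
  rcases le_total p q with h | h
  · calc (p + q) ^ e ≤ (2 * q) ^ e := Real.rpow_le_rpow (by linarith) (by linarith) he
      _ = 2 ^ e * q ^ e := Real.mul_rpow (by norm_num) hq
      _ ≤ 2 ^ e * (p ^ e + q ^ e) := by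
          have := Real.rpow_nonneg hp e
          have h2 : (0:ℝ) ≤ 2 ^ e := Real.rpow_nonneg (by norm_num) e
          nlinarith
  · calc (p + q) ^ e ≤ (2 * p) ^ e := Real.rpow_le_rpow (by linarith) (by linarith) he
      _ = 2 ^ e * p ^ e := Real.mul_rpow (by norm_num) hp
      _ ≤ 2 ^ e * (p ^ e + q ^ e) := by
          have := Real.rpow_nonneg hq e
          have h2 : (0:ℝ) ≤ 2 ^ e := Real.rpow_nonneg (by norm_num) e
          nlinarith

lemma pair_bound {x q e c : ℝ} (hx : 0 < x) (hq : 0 < q) (he : 0 ≤ e) (hc : 0 < c) :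
    x ^ q * |Real.log x| ^ e ≤ (1/c) ^ e * 2 ^ e * (x ^ (q + c*e) + x ^ (q - c*e)) := by
  have h1 : |Real.log x| ^ e ≤ ((x ^ c + x ^ (-c)) / c) ^ e :=
    Real.rpow_le_rpow (abs_nonneg _) (abs_log_le_rpow hx hc) he
  have h2 : ((x ^ c + x ^ (-c)) / c) ^ e = (1/c) ^ e * (x ^ c + x ^ (-c)) ^ e := by
    rw [← Real.mul_rpow (by positivity) (by positivity)]
    ring_nf
  have h3 : (x ^ c + x ^ (-c)) ^ e ≤ 2 ^ e * ((x ^ c) ^ e + (x ^ (-c)) ^ e) :=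
    rpow_add_le_two_rpow (Real.rpow_nonneg hx.le _) (Real.rpow_nonneg hx.le _) he
  have h4 : (x ^ c) ^ e = x ^ (c * e) := (Real.rpow_mul hx.le c e).symm
  have h5 : (x ^ (-c)) ^ e = x ^ (-(c * e)) := by
    rw [← Real.rpow_mul hx.le]; ring_nf
  have h6 : x ^ q * x ^ (c*e) = x ^ (q + c*e) := (Real.rpow_add hx q _).symm
  have h7 : x ^ q * x ^ (-(c*e)) = x ^ (q - c*e) := by
    rw [← Real.rpow_add hx]; ring_nf
  have hxq : (0:ℝ) ≤ x ^ q := Real.rpow_nonneg hx.le q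
  calc x ^ q * |Real.log x| ^ e
      ≤ x ^ q * ((1/c) ^ e * (2 ^ e * ((x ^ c) ^ e + (x ^ (-c)) ^ e))) := by
        apply mul_le_mul_of_nonneg_left _ hxq
        calc |Real.log x| ^ e ≤ (1/c) ^ e * (x ^ c + x ^ (-c)) ^ e := by rw [← h2]; exact h1
          _ ≤ (1/c) ^ e * (2 ^ e * ((x ^ c) ^ e + (x ^ (-c)) ^ e)) := by
              apply mul_le_mul_of_nonneg_left h3 (Real.rpow_nonneg (by positivity) e)
    _ = (1/c) ^ e * 2 ^ e * (x ^ (q + c*e) + x ^ (q - c*e)) := by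
        rw [h4, h5, ← h6, ← h7]; ring

lemma exp_kill {r a m : ℝ} (hr : 0 < r) (hr2 : r ≤ Real.exp (Real.exp (Real.exp 1)))
    (ha : 0 < a) (ha1 : a ≤ 1) (hm : 0 < m) (hm2 : m ≤ 2) :
    r ^ a * |Real.log r| ^ m ≤
      Real.exp 21 * 441 + Real.exp (2 * |Real.log (2/a)|) := by
  have hee : Real.exp (Real.exp 1) ≤ 21 := by
    have h1 : Real.exp 1 < 2.7182818286 := Real.exp_one_lt_d9
    have h2 : Real.exp (Real.exp 1) ≤ Real.exp 3 := Real.exp_le_exp.2 (by linarith)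
    have h3 : Real.exp 3 = Real.exp 1 * Real.exp 1 * Real.exp 1 := by
      rw [← Real.exp_add, ← Real.exp_add]; norm_num
    nlinarith [Real.exp_pos 1]
  have hpos2 : (0:ℝ) ≤ Real.exp (2 * |Real.log (2/a)|) := (Real.exp_pos _).le
  rcases le_or_gt 1 r with h1 | h1
  · have hlr : 0 ≤ Real.log r := Real.log_nonneg h1
    have hw : |Real.log r| = Real.log r := abs_of_nonneg hlr
    have hwle : Real.log r ≤ 21 := by
      have h4 := Real.log_le_log hr hr2
      rw [Real.log_exp] at h4
      exact h4.trans hee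
    have hb1 : r ^ a ≤ Real.exp 21 := by
      have h2 : r ^ a ≤ r ^ (1:ℝ) := Real.rpow_le_rpow_of_exponent_le h1 ha1
      rw [Real.rpow_one] at h2
      have h3 : r ≤ Real.exp 21 := hr2.trans (Real.exp_le_exp.2 hee)
      linarith
    have hb2 : |Real.log r| ^ m ≤ 441 := by
      rw [hw]
      calc Real.log r ^ m ≤ (21:ℝ) ^ m := Real.rpow_le_rpow hlr hwle hm.le
        _ ≤ (21:ℝ) ^ (2:ℝ) := Real.rpow_le_rpow_of_exponent_le (by norm_num) hm2
        _ = 441 := by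
            rw [show (2:ℝ) = ((2:ℕ):ℝ) by norm_num, Real.rpow_natCast]; norm_num
    have := mul_le_mul hb1 hb2 (Real.rpow_nonneg (abs_nonneg _) m) (Real.exp_pos 21).le
    linarith
  · set w := -Real.log r with hwdef
    have hw0 : 0 < w := by
      have := Real.log_neg hr h1; simp only [hwdef]; linarith
    have habs : |Real.log r| = w := by
      rw [hwdef, abs_of_neg (by linarith [Real.log_neg hr h1])]
    have hra : r ^ a = Real.exp (-(a * w)) := by
      rw [Real.rpow_def_of_pos hr]; congr 1; rw [hwdef]; ring
    have hwm : w ^ m = Real.exp (m * Real.log w) := by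
      rw [Real.rpow_def_of_pos hw0]; ring_nf
    have hkey : m * Real.log w ≤ a * w + 2 * |Real.log (2/a)| := by
      have hsplit : Real.log w = Real.log (w * (a/m)) + Real.log (m/a) := by
        rw [← Real.log_mul (by positivity) (by positivity)]
        congr 1; field_simp
      have hl1 : Real.log (w * (a/m)) ≤ w * (a/m) := log_le_self (by positivity)
      have hl2 : m * Real.log (m/a) ≤ 2 * |Real.log (2/a)| := by
        have hmono : Real.log (m/a) ≤ Real.log (2/a) :=
          Real.log_le_log (by positivity) (by rw [div_le_div_iff₀ ha ha]; nlinarith)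
        rcases le_or_gt (Real.log (m/a)) 0 with h | h
        · nlinarith [abs_nonneg (Real.log (2/a))]
        · have := le_abs_self (Real.log (2/a))
          nlinarith
      have hmain : m * Real.log (w * (a/m)) ≤ a * w := by
        calc m * Real.log (w * (a/m)) ≤ m * (w * (a/m)) :=
              mul_le_mul_of_nonneg_left hl1 hm.le
          _ = a * w := by field_simp
      nlinarith [hsplit]
    calc r ^ a * |Real.log r| ^ m = Real.exp (-(a*w)) * Real.exp (m * Real.log w) := by
          rw [habs, hra, hwm]
      _ = Real.exp (m * Real.log w - a * w) := by rw [← Real.exp_add]; ring_nf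
      _ ≤ Real.exp (2 * |Real.log (2/a)|) := Real.exp_le_exp.2 (by linarith)
      _ ≤ Real.exp 21 * 441 + Real.exp (2 * |Real.log (2/a)|) := by
          nlinarith [Real.exp_pos (21:ℝ)]

lemma small_bound {α η a : ℝ} (hα : 1 ≤ α) (ha : 0 < a) (ha1 : a ≤ 1)
    (he3 : 0 ≤ 1/α + η) :
    ∃ C : ℝ, 0 ≤ C ∧ ∀ r : ℝ, 0 < r → r ≤ Real.exp (Real.exp (Real.exp 1)) →
      r ^ a * Real.log r ^ (1/α) * Real.log (Real.log r) ^ (1/α) *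
        Real.log (Real.log (Real.log r)) ^ (1/α + η) ≤ C := by
  set q : ℝ := 1/α with hqdef
  set e3 : ℝ := q + η with he3def
  have hq : 0 < q := by rw [hqdef]; positivity
  have hq1 : q ≤ 1 := by rw [hqdef, div_le_one (by linarith)]; linarith
  set c : ℝ := q / (2*(e3+1)) with hcdef
  have hc : 0 < c := by rw [hcdef]; positivity
  set c' : ℝ := q / 3 with hc'def
  have hc' : 0 < c' := by rw [hc'def]; positivity
  have hce3 : c * e3 ≤ q / 2 := by
    rw [hcdef, div_mul_eq_mul_div, div_le_div_iff₀ (by positivity) (by norm_num)]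
    nlinarith
  clear_value q e3 c c'
  have hp₁ : 0 < q + c*e3 := by nlinarith [mul_nonneg hc.le he3]
  have hp₂ : 0 < q - c*e3 := by linarith
  have hp₁2 : q + c*e3 ≤ 3/2 := by linarith
  have hp₂2 : q - c*e3 ≤ 3/2 := by nlinarith [mul_nonneg hc.le he3]
  have hexp : ∀ p : ℝ, 0 < p → p ≤ 3/2 →
      0 < q + c'*p ∧ q + c'*p ≤ 2 ∧ 0 < q - c'*p ∧ q - c'*p ≤ 2 := by
    intro p hp hp2
    have h1 : c' * p ≤ q/2 := by
      rw [hc'def]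
      nlinarith [mul_nonneg hq.le (by linarith : (0:ℝ) ≤ 3/2 - p)]
    have h2 : 0 ≤ c' * p := by positivity
    exact ⟨by linarith, by linarith, by linarith, by linarith⟩
  set CB : ℝ := Real.exp 21 * 441 + Real.exp (2 * |Real.log (2/a)|) with hCBdef
  have hCB : 0 < CB := by rw [hCBdef]; positivity
  set K1 : ℝ := (1/c) ^ e3 * 2 ^ e3 with hK1def
  have hK1 : 0 < K1 := by rw [hK1def]; positivity
  set K2 : ℝ := (3/q) ^ (2:ℝ) * 2 ^ (2:ℝ) with hK2def
  have hK2 : 0 < K2 := by rw [hK2def]; positivity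
  have hK2bd : ∀ p : ℝ, 0 < p → p ≤ 3/2 → (1/c') ^ p * 2 ^ p ≤ K2 := by
    intro p hp hp2
    have h1 : (1/c') ^ p ≤ (3/q) ^ p := by
      apply Real.rpow_le_rpow (by positivity) _ hp.le
      rw [hc'def, one_div, inv_div]
    have h2 : (3/q) ^ p ≤ (3/q) ^ (2:ℝ) := by
      apply Real.rpow_le_rpow_of_exponent_le _ (by linarith)
      rw [le_div_iff₀ hq]; linarith
    have h3 : (2:ℝ) ^ p ≤ 2 ^ (2:ℝ) :=
      Real.rpow_le_rpow_of_exponent_le (by norm_num) (by linarith)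
    have h5 : (0:ℝ) ≤ (2:ℝ) ^ p := Real.rpow_nonneg (by norm_num) p
    rw [hK2def]
    exact mul_le_mul (h1.trans h2) h3 h5 (Real.rpow_nonneg (by positivity) _)
  have hCpos : (0:ℝ) < K1 * (K2 * (4 * CB)) := by positivity
  clear_value CB K1 K2
  refine ⟨K1 * (K2 * (4 * CB)), hCpos.le, ?_⟩
  intro r hr hr2
  set w : ℝ := |Real.log r| with hwdef
  set X : ℝ := |Real.log w| with hXdef
  set Y : ℝ := |Real.log X| with hYdef
  have hw0 : 0 ≤ w := abs_nonneg _
  have hX0 : 0 ≤ X := abs_nonneg _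
  have hlogw : Real.log w = Real.log (Real.log r) := by rw [hwdef, Real.log_abs]
  have hlogX : Real.log X = Real.log (Real.log (Real.log r)) := by
    rw [hXdef, Real.log_abs, hlogw]
  have habs2 : |Real.log (Real.log r)| = X := by rw [hXdef, hlogw]
  have habs3 : |Real.log (Real.log (Real.log r))| = Y := by rw [hYdef, hlogX]
  have hran : (0:ℝ) ≤ r ^ a := Real.rpow_nonneg hr.le a
  have hraw : r ^ a * Real.log r ^ q * Real.log (Real.log r) ^ q *
      Real.log (Real.log (Real.log r)) ^ e3 ≤ r ^ a * w ^ q * X ^ q * Y ^ e3 := by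
    have b1 : |Real.log r ^ q| ≤ w ^ q := by
      rw [hwdef]; exact Real.abs_rpow_le_abs_rpow _ _
    have b2 : |Real.log (Real.log r) ^ q| ≤ X ^ q := by
      rw [← habs2]; exact Real.abs_rpow_le_abs_rpow _ _
    have b3 : |Real.log (Real.log (Real.log r)) ^ e3| ≤ Y ^ e3 := by
      rw [← habs3]; exact Real.abs_rpow_le_abs_rpow _ _
    calc r ^ a * Real.log r ^ q * Real.log (Real.log r) ^ q *
        Real.log (Real.log (Real.log r)) ^ e3
        ≤ |r ^ a * Real.log r ^ q * Real.log (Real.log r) ^ q *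
            Real.log (Real.log (Real.log r)) ^ e3| := le_abs_self _
      _ = r ^ a * |Real.log r ^ q| * |Real.log (Real.log r) ^ q| *
            |Real.log (Real.log (Real.log r)) ^ e3| := by
          rw [abs_mul, abs_mul, abs_mul, abs_of_nonneg hran]
      _ ≤ r ^ a * w ^ q * X ^ q * Y ^ e3 := by
          apply mul_le_mul _ b3 (abs_nonneg _) (by positivity)
          apply mul_le_mul _ b2 (abs_nonneg _) (by positivity)
          exact mul_le_mul_of_nonneg_left b1 hran
  rcases eq_or_lt_of_le hw0 with hweq | hwpos
  · have hzero : w ^ q = 0 := by rw [← hweq, Real.zero_rpow (ne_of_gt hq)]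
    calc r ^ a * Real.log r ^ q * Real.log (Real.log r) ^ q *
        Real.log (Real.log (Real.log r)) ^ e3 ≤ r ^ a * w ^ q * X ^ q * Y ^ e3 := hraw
      _ = 0 := by rw [hzero]; ring
      _ ≤ K1 * (K2 * (4 * CB)) := hCpos.le
  rcases eq_or_lt_of_le hX0 with hXeq | hXpos
  · have hzero : X ^ q = 0 := by rw [← hXeq, Real.zero_rpow (ne_of_gt hq)]
    calc r ^ a * Real.log r ^ q * Real.log (Real.log r) ^ q *
        Real.log (Real.log (Real.log r)) ^ e3 ≤ r ^ a * w ^ q * X ^ q * Y ^ e3 := hraw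
      _ = 0 := by rw [hzero]; ring
      _ ≤ K1 * (K2 * (4 * CB)) := hCpos.le
  have step1 : X ^ q * Y ^ e3 ≤ K1 * (X ^ (q + c*e3) + X ^ (q - c*e3)) := by
    have h := pair_bound hXpos hq he3 hc
    rw [← hYdef] at h
    rw [hK1def]
    exact h
  have step2 : ∀ p : ℝ, 0 < p → p ≤ 3/2 → r ^ a * (w ^ q * X ^ p) ≤ K2 * (2 * CB) := by
    intro p hp hp2
    obtain ⟨hm1, hm2, hm3, hm4⟩ := hexp p hp hp2
    have pb := pair_bound hwpos hq hp.le hc'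
    rw [← hXdef] at pb
    have ekp : r ^ a * w ^ (q + c'*p) ≤ CB := by
      have h := exp_kill hr hr2 ha ha1 hm1 hm2
      rw [← hwdef] at h
      rw [hCBdef]; exact h
    have ekm : r ^ a * w ^ (q - c'*p) ≤ CB := by
      have h := exp_kill hr hr2 ha ha1 hm3 hm4
      rw [← hwdef] at h
      rw [hCBdef]; exact h
    have hS0 : (0:ℝ) ≤ r ^ a * w ^ (q + c'*p) + r ^ a * w ^ (q - c'*p) := by positivity
    calc r ^ a * (w ^ q * X ^ p)
        ≤ r ^ a * ((1/c') ^ p * 2 ^ p * (w ^ (q + c'*p) + w ^ (q - c'*p))) :=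
          mul_le_mul_of_nonneg_left pb hran
      _ = ((1/c') ^ p * 2 ^ p) * (r ^ a * w ^ (q + c'*p) + r ^ a * w ^ (q - c'*p)) := by ring
      _ ≤ K2 * (2 * CB) := mul_le_mul (hK2bd p hp hp2) (by linarith) hS0 hK2.le
  calc r ^ a * Real.log r ^ q * Real.log (Real.log r) ^ q *
      Real.log (Real.log (Real.log r)) ^ e3
      ≤ r ^ a * w ^ q * X ^ q * Y ^ e3 := hraw
    _ = (r ^ a * w ^ q) * (X ^ q * Y ^ e3) := by ring
    _ ≤ (r ^ a * w ^ q) * (K1 * (X ^ (q + c*e3) + X ^ (q - c*e3))) :=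
        mul_le_mul_of_nonneg_left step1 (by positivity)
    _ = K1 * (r ^ a * (w ^ q * X ^ (q + c*e3)) + r ^ a * (w ^ q * X ^ (q - c*e3))) := by ring
    _ ≤ K1 * (K2 * (2 * CB) + K2 * (2 * CB)) := by
        have s1 := step2 _ hp₁ hp₁2
        have s2 := step2 _ hp₂ hp₂2
        apply mul_le_mul_of_nonneg_left _ hK1.le
        linarith
    _ = K1 * (K2 * (4 * CB)) := by ring


lemma log_add_le {x b : ℝ} (hx : 0 < x) (hb : 0 ≤ b) :
    Real.log (x + b) ≤ Real.log x + b / x := by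
  have h1 : Real.log ((x + b) / x) ≤ (x + b) / x - 1 :=
    Real.log_le_sub_one_of_pos (by positivity)
  have h2 : Real.log ((x + b) / x) = Real.log (x + b) - Real.log x :=
    Real.log_div (by positivity) (ne_of_gt hx)
  have h3 : (x + b) / x - 1 = b / x := by field_simp; ring
  rw [h2, h3] at h1; linarith

lemma log_le_two_rpow {x : ℝ} (hx : 0 ≤ x) : Real.log x ≤ 2 * x ^ (1/2 : ℝ) := by
  have := Real.log_le_rpow_div hx (by norm_num : (0:ℝ) < 1/2)
  linarith

lemma mul_log_ge_neg_one {u : ℝ} (hu : 0 < u) : -1 ≤ u * Real.log u := by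
  have h1 : Real.log u⁻¹ ≤ u⁻¹ := log_le_self (by positivity)
  have h2 : Real.log u⁻¹ = - Real.log u := Real.log_inv u
  have h3 : u * u⁻¹ = 1 := mul_inv_cancel₀ (ne_of_gt hu)
  nlinarith [mul_le_mul_of_nonneg_left h1 hu.le]

lemma log_le_mul_of_ge {x c : ℝ} (hc : 0 < c) (hx : (2/c)^2 ≤ x) (hx1 : 1 ≤ x) :
    Real.log x ≤ c * x := by
  have hx0 : (0:ℝ) < x := by linarith
  have h1 : Real.log x ≤ 2 * x ^ (1/2 : ℝ) := log_le_two_rpow hx0.le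
  have hs : (2/c) ≤ x ^ (1/2 : ℝ) := by
    have h2 : ((2/c)^2 : ℝ) ^ (1/2 : ℝ) ≤ x ^ (1/2 : ℝ) :=
      Real.rpow_le_rpow (by positivity) hx (by norm_num)
    have h3 : ((2/c)^2 : ℝ) ^ (1/2 : ℝ) = 2/c := by
      rw [← Real.rpow_natCast (2/c) 2, ← Real.rpow_mul (by positivity)]
      norm_num
    linarith
  have hxx : x ^ (1/2 : ℝ) * x ^ (1/2 : ℝ) = x := by
    rw [← Real.rpow_add hx0]; norm_num
  have hs0 : (0:ℝ) ≤ x ^ (1/2:ℝ) := Real.rpow_nonneg hx0.le _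
  have h5 : 2 * x ^ (1/2:ℝ) ≤ c * x := by
    calc 2 * x ^ (1/2:ℝ) = c * (2/c * x ^ (1/2:ℝ)) := by field_simp
      _ ≤ c * (x ^ (1/2:ℝ) * x ^ (1/2:ℝ)) := by
          apply mul_le_mul_of_nonneg_left (mul_le_mul_of_nonneg_right hs hs0) hc.le
      _ = c * x := by rw [hxx]
  linarith

open Filter in
lemma ev_log_le {u : ℝ → ℝ} (hu : Tendsto u atTop atTop) {c : ℝ} (hc : 0 < c) :
    ∀ᶠ t in atTop, Real.log (u t) ≤ c * u t := by
  filter_upwards [hu.eventually_ge_atTop (max 1 ((2/c)^2))] with t ht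
  exact log_le_mul_of_ge hc (le_trans (le_max_right _ _) ht) (le_trans (le_max_left _ _) ht)

end PA

set_option maxHeartbeats 4000000 in
theorem pareto_limsup_variational_asymptotics
    (d : ℕ) (hd : 1 ≤ d) (α η : ℝ) (hα : (d : ℝ) < α)
    (f : ℝ → ℝ → ℝ)
    (hf : ∀ t r : ℝ, f t r = r ^ ((d : ℝ) / α) * (Real.log r) ^ (1 / α) *
          (Real.log (Real.log r)) ^ (1 / α) *
          (Real.log (Real.log (Real.log r))) ^ (1 / α + η)
        - r / t * Real.log (r / (2 * d * Real.exp 1 * t)))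
    (rhat : ℝ → ℝ)
    (hmax : ∀ᶠ t : ℝ in atTop, 0 < rhat t ∧ ∀ r > 0, f t r ≤ f t (rhat t)) :
    Tendsto (fun t => (Real.log (f t (rhat t)) - (d : ℝ) / (α - d) * Real.log t
          + ((d : ℝ) - 1) / (α - d) * Real.log (Real.log t)) /
        Real.log (Real.log (Real.log t))) atTop (nhds (1 / (α - d))) := by
  have hd1 : (1:ℝ) ≤ (d:ℝ) := by exact_mod_cast hd
  have hα1 : (1:ℝ) < α := lt_of_le_of_lt hd1 hα
  have hαpos : (0:ℝ) < α := by linarith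
  have had : (0:ℝ) < α - (d:ℝ) := by linarith
  have hdpos : (0:ℝ) < (d:ℝ) := by linarith
  have he2 : (2:ℝ) ≤ Real.exp 1 := by
    have := Real.add_one_le_exp 1; linarith
  have hcde : (1:ℝ) ≤ 2 * (d:ℝ) * Real.exp 1 := by nlinarith
  by_cases he3 : 0 ≤ 1/α + η
  · -- main case : 0 ≤ 1/α + η
    have ha : (0:ℝ) < (d:ℝ)/α := by positivity
    have ha1 : (d:ℝ)/α < 1 := by rw [div_lt_one hαpos]; exact hα
    have hα0 : α ≠ 0 := ne_of_gt hαpos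
    have had0 : (α - (d:ℝ)) ≠ 0 := ne_of_gt had
    obtain ⟨C₀, hC₀, hC₀bd⟩ := PA.small_bound hα1.le ha ha1.le he3
    set aa : ℝ := (d:ℝ)/α with haadef
    set qq : ℝ := 1/α with hqqdef
    set e3 : ℝ := qq + η with he3def
    set β : ℝ := α/(α - (d:ℝ)) with hβdef
    set γ : ℝ := (α-1)/(α - (d:ℝ)) with hγdef
    set δv : ℝ := 1/(α - (d:ℝ)) with hδdef
    set A1 : ℝ := (d:ℝ)/(α - (d:ℝ)) with hA1def
    set A2 : ℝ := ((d:ℝ)-1)/(α - (d:ℝ)) with hA2def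
    set c₂ : ℝ := Real.log (2*(d:ℝ)*Real.exp 1) with hc₂def
    set b : ℝ := Real.log (2*β) with hbdef
    have haa0 : 0 < aa := ha
    have haa1 : aa < 1 := ha1
    have hqq0 : 0 < qq := by rw [hqqdef]; positivity
    have hqq1 : qq ≤ 1 := by rw [hqqdef, div_le_one hαpos]; linarith
    have he30 : 0 ≤ e3 := he3
    have hβ1 : 1 < β := by rw [hβdef, lt_div_iff₀ had]; linarith
    have hγ0 : 0 < γ := by rw [hγdef]; exact div_pos (by linarith) had
    have hδ0 : 0 < δv := by rw [hδdef]; positivity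
    have hA10 : 0 < A1 := by rw [hA1def]; positivity
    have hA20 : 0 ≤ A2 := by rw [hA2def]; apply div_nonneg (by linarith) had.le
    have hb0 : 0 < b := by rw [hbdef]; apply Real.log_pos; linarith
    have hc₂0 : 0 ≤ c₂ := by rw [hc₂def]; exact Real.log_nonneg hcde
    have F1 : aa*β = A1 := by rw [haadef, hβdef, hA1def]; field_simp <;> ring
    have F2 : qq - aa*γ = -A2 := by
      rw [hqqdef, haadef, hγdef, hA2def]; field_simp <;> ring
    have F3 : aa*δv + qq = δv := by
      rw [hqqdef, haadef, hδdef]; field_simp <;> ring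
    have F4 : β - 1 = A1 := by rw [hβdef, hA1def]; field_simp <;> ring
    have F5 : 1 - γ = -A2 := by rw [hγdef, hA2def]; field_simp <;> ring
    have F10 : (1-aa)*β = 1 := by rw [haadef, hβdef]; field_simp <;> ring
    have F11 : (1-aa)*γ = 1 - qq := by rw [haadef, hγdef, hqqdef]; field_simp <;> ring
    have F12 : (1-aa)*δv = qq := by rw [haadef, hδdef, hqqdef]; field_simp <;> ring
    -- value of f at exponential points
    have hval : ∀ t s : ℝ, 0 < t → 3 ≤ s → 3 ≤ Real.log s →
        f t (Real.exp s) = Real.exp (s*aa + Real.log s*qq + Real.log (Real.log s)*qq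
            + Real.log (Real.log (Real.log s))*e3)
          - Real.exp (s - Real.log t) * (s - c₂ - Real.log t) := by
      intro t s ht hs3 hls3
      have hs0 : (0:ℝ) < s := by linarith
      have hls0 : (0:ℝ) < Real.log s := by linarith
      have hlls0 : (0:ℝ) < Real.log (Real.log s) := by
        calc (0:ℝ) < Real.log 3 := Real.log_pos (by norm_num)
          _ ≤ Real.log (Real.log s) := Real.log_le_log (by norm_num) hls3
      have h1 : Real.exp s / t = Real.exp (s - Real.log t) := by
        rw [Real.exp_sub, Real.exp_log ht]
      have h2 : Real.log (Real.exp s / (2*(d:ℝ)*Real.exp 1*t)) = s - c₂ - Real.log t := by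
        rw [Real.log_div (Real.exp_ne_zero s) (by positivity), Real.log_exp,
          Real.log_mul (by positivity) (ne_of_gt ht), hc₂def]
        ring
      rw [hf, Real.log_exp, h1, h2]
      congr 1
      rw [Real.rpow_def_of_pos (Real.exp_pos s), Real.log_exp,
        Real.rpow_def_of_pos hs0, Real.rpow_def_of_pos hls0, Real.rpow_def_of_pos hlls0,
        ← Real.exp_add, ← Real.exp_add, ← Real.exp_add]
    clear_value aa qq e3 β γ δv A1 A2 c₂ b
    -- tendsto facts
    have hLt : Tendsto Real.log atTop atTop := Real.tendsto_log_atTop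
    have hLLt : Tendsto (fun t : ℝ => Real.log (Real.log t)) atTop atTop := hLt.comp hLt
    have hLLLt : Tendsto (fun t : ℝ => Real.log (Real.log (Real.log t))) atTop atTop :=
      hLt.comp hLLt
    -- LOWER BOUND
    have key_low : ∀ ε' : ℝ, 0 < ε' → ∀ᶠ t in atTop,
        Real.exp (A1 * Real.log t - A2 * Real.log (Real.log t)
          + (δv - ε') * Real.log (Real.log (Real.log t))) ≤ f t (rhat t) := by
      intro ε' hε'
      set ε₁ : ℝ := ε'/(2*aa) with hε₁def
      have hε₁ : 0 < ε₁ := by rw [hε₁def]; positivity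
      have F6 : aa*ε₁ = ε'/2 := by
        rw [hε₁def]; field_simp [ne_of_gt haa0] <;> ring
      have F6b : (1-aa)*ε₁ = (ε'/2)*(1/aa-1) := by
        rw [hε₁def]; field_simp [ne_of_gt haa0] <;> ring
      clear_value ε₁
      have hcoefgap : 0 < (ε'/2)*(1/aa-1) := by
        have : 1 < 1/aa := by rw [lt_div_iff₀ haa0]; linarith
        have h2 : 0 < 1/aa - 1 := by linarith
        positivity
      set c5 : ℝ := (β-1)/(γ + |δv| + ε₁ + 1) with hc5def
      have hXpos : 0 < γ + |δv| + ε₁ + 1 := by positivity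
      have hc5 : 0 < c5 := by rw [hc5def]; exact div_pos (by linarith) hXpos
      have hc5bd : (γ + |δv| + ε₁)*c5 ≤ β - 1 := by
        rw [hc5def, mul_div_assoc', div_le_iff₀ hXpos]
        have hstep : (β-1)*(γ + |δv| + ε₁) ≤ (β-1)*(γ + |δv| + ε₁ + 1) :=
          mul_le_mul_of_nonneg_left (by linarith) (by linarith)
        linarith
      clear_value c5
      set Kgap : ℝ := (b+1)/((ε'/2)*(1/aa-1)) with hKgapdef
      have hKgapeq : ((ε'/2)*(1/aa-1))*Kgap = b + 1 := by
        rw [hKgapdef, mul_comm, div_mul_cancel₀ _ (ne_of_gt hcoefgap)]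
      clear_value Kgap
      filter_upwards [hmax, eventually_ge_atTop (1:ℝ),
        hLt.eventually_ge_atTop 3,
        hLLt.eventually_ge_atTop (max 3 b),
        hLLLt.eventually_ge_atTop (max 1 (max Kgap (2/ε'))),
        PA.ev_log_le hLt hc5]
        with t hmaxt ht1 hL3 hLLm hLLLm hLLc5
      obtain ⟨hrhat, hfle⟩ := hmaxt
      have ht0 : (0:ℝ) < t := by linarith
      set L := Real.log t with hLdef
      set LL := Real.log L with hLLdef
      set LLL := Real.log LL with hLLLdef
      clear_value L LL LLL
      have hLpos : (0:ℝ) < L := by linarith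
      have hLL3 : 3 ≤ LL := le_trans (le_max_left _ _) hLLm
      have hLLb : b ≤ LL := le_trans (le_max_right _ _) hLLm
      have hLLpos : (0:ℝ) < LL := by linarith
      have hLLL1 : 1 ≤ LLL := le_trans (le_max_left _ _) hLLLm
      have hLLLKgap : Kgap ≤ LLL := le_trans (le_trans (le_max_left _ _) (le_max_right _ _)) hLLLm
      have hLLL2e : 2/ε' ≤ LLL := le_trans (le_trans (le_max_right _ _) (le_max_right _ _)) hLLLm
      have hgap : b + 1 ≤ ((ε'/2)*(1/aa-1))*LLL := by
        have h1 : ((ε'/2)*(1/aa-1))*Kgap = b + 1 := by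
          rw [hKgapdef, mul_comm, div_mul_cancel₀ _ (ne_of_gt hcoefgap)]
        linarith [mul_le_mul_of_nonneg_left hLLLKgap hcoefgap.le]
      have hE7 : 1 ≤ (ε'/2)*LLL := by
        have h1 : (ε'/2)*(2/ε') = 1 := by
          rw [div_mul_div_comm, mul_comm, div_self (ne_of_gt (by positivity : (0:ℝ) < 2*ε'))]
        linarith [mul_le_mul_of_nonneg_left hLLL2e (by positivity : (0:ℝ) ≤ ε'/2)]
      have hE5 : γ*LL + (|δv| + ε₁)*LLL ≤ (β-1)*L := by
        have h1 : LLL ≤ LL := by rw [hLLLdef]; exact PA.log_le_self hLLpos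
        have h2 : LL ≤ c5 * L := hLLc5
        have h3 := hc5bd
        have h4 : (γ + |δv| + ε₁)*LL ≤ (γ + |δv| + ε₁)*(c5*L) :=
          mul_le_mul_of_nonneg_left h2 (by linarith [abs_nonneg δv])
        have h5 : ((γ + |δv| + ε₁)*c5)*L ≤ (β-1)*L :=
          mul_le_mul_of_nonneg_right h3 hLpos.le
        have h6 : (|δv| + ε₁)*LLL ≤ (|δv| + ε₁)*LL :=
          mul_le_mul_of_nonneg_left h1 (by linarith [abs_nonneg δv])
        linarith
      set δ' : ℝ := δv - ε₁ with hδ'def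
      clear_value δ'
      have habs1 : -(|δv| + ε₁) ≤ δ' := by
        have := neg_abs_le δv; rw [hδ'def]; linarith
      have habs2 : δ' ≤ |δv| + ε₁ := by
        have := le_abs_self δv; rw [hδ'def]; linarith
      set s₀ : ℝ := β*L - γ*LL + δ'*LLL with hs₀def
      clear_value s₀
      have hLLL0 : (0:ℝ) ≤ LLL := by linarith
      have hs₀L : L ≤ s₀ := by
        have h1 : -(|δv| + ε₁)*LLL ≤ δ'*LLL := mul_le_mul_of_nonneg_right habs1 hLLL0
        rw [hs₀def]; linarith
      have hs₀3 : 3 ≤ s₀ := le_trans hL3 hs₀L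
      have hs₀pos : (0:ℝ) < s₀ := by linarith
      have hs₀2β : s₀ ≤ 2*β*L := by
        have h1 : δ'*LLL ≤ (|δv| + ε₁)*LLL := mul_le_mul_of_nonneg_right habs2 hLLL0
        have h2 : 0 ≤ γ*LL := by positivity
        rw [hs₀def]; linarith
      have hlogs₀low : LL ≤ Real.log s₀ := by
        rw [hLLdef]; exact Real.log_le_log hLpos hs₀L
      have hlogs₀up : Real.log s₀ ≤ LL + b := by
        have h1 : Real.log s₀ ≤ Real.log (2*β*L) := Real.log_le_log hs₀pos hs₀2β
        rw [show (2*β*L) = (2*β)*L by ring,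
          Real.log_mul (by positivity) (ne_of_gt hLpos)] at h1
        rw [hbdef] at *
        linarith [h1]
      have hls₀3 : 3 ≤ Real.log s₀ := le_trans hLL3 hlogs₀low
      have hls₀pos : (0:ℝ) < Real.log s₀ := by linarith
      have hlls₀low : LLL ≤ Real.log (Real.log s₀) := by
        rw [hLLLdef]; exact Real.log_le_log hLLpos hlogs₀low
      have hlls₀up : Real.log (Real.log s₀) ≤ LLL + 1 := by
        have h1 : Real.log (Real.log s₀) ≤ Real.log (LL + b) :=
          Real.log_le_log hls₀pos hlogs₀up
        have h2 : Real.log (LL + b) ≤ Real.log LL + b/LL := PA.log_add_le hLLpos hb0.le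
        have h3 : b/LL ≤ 1 := by rw [div_le_one hLLpos]; linarith
        rw [hLLLdef]; linarith
      have hfval := hval t s₀ ht0 hs₀3 hls₀3
      rw [← hLdef] at hfval
      -- bound the main term from below
      have hterm : Real.exp (s₀*aa + LL*qq + LLL*qq) ≤
          Real.exp (s₀*aa + Real.log s₀*qq + Real.log (Real.log s₀)*qq
            + Real.log (Real.log (Real.log s₀))*e3) := by
        apply Real.exp_le_exp.2
        have h1 : LL*qq ≤ Real.log s₀ * qq := mul_le_mul_of_nonneg_right hlogs₀low hqq0.le
        have h2 : LLL*qq ≤ Real.log (Real.log s₀)*qq :=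
          mul_le_mul_of_nonneg_right hlls₀low hqq0.le
        have h3 : 0 ≤ Real.log (Real.log (Real.log s₀))*e3 := by
          apply mul_nonneg _ he30
          apply Real.log_nonneg
          linarith
        linarith
      -- bound the penalty from above
      have hpenb : Real.exp (s₀ - L) * (s₀ - c₂ - L) ≤ Real.exp (s₀ - L + (LL + b)) := by
        have h2 : s₀ = Real.exp (Real.log s₀) := (Real.exp_log hs₀pos).symm
        have h3 : Real.exp (Real.log s₀) ≤ Real.exp (LL + b) := Real.exp_le_exp.2 hlogs₀up
        have h1 : s₀ - c₂ - L ≤ Real.exp (LL + b) := by linarith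
        calc Real.exp (s₀ - L) * (s₀ - c₂ - L) ≤ Real.exp (s₀ - L) * Real.exp (LL + b) :=
              mul_le_mul_of_nonneg_left h1 (Real.exp_pos _).le
          _ = Real.exp (s₀ - L + (LL + b)) := (Real.exp_add _ _).symm
      -- two key linear identities
      have hid : s₀*aa + LL*qq + LLL*qq - (A1*L - A2*LL + (δv-ε')*LLL) = (ε'/2)*LLL := by
        rw [hs₀def, hδ'def]
        linear_combination L*F1 + LL*F2 + LLL*F3 - LLL*F6
      have hid2 : (s₀*aa + LL*qq + LLL*qq) - (s₀ - L + (LL + b)) =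
          ((ε'/2)*(1/aa-1))*LLL - b := by
        rw [hs₀def, hδ'def]
        linear_combination (-L)*F10 + LL*F11 - LLL*F12 + LLL*F6b
      have hmain : Real.exp (A1*L - A2*LL + (δv-ε')*LLL) ≤ f t (Real.exp s₀) := by
        rw [hfval]
        have e1 : Real.exp (s₀ - L) * (s₀ - c₂ - L) ≤
            Real.exp ((s₀*aa + LL*qq + LLL*qq) - 1) := by
          apply le_trans hpenb
          apply Real.exp_le_exp.2
          linarith
        have e2 : Real.exp ((s₀*aa + LL*qq + LLL*qq) - 1) * 2 ≤
            Real.exp (s₀*aa + LL*qq + LLL*qq) := by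
          have hsplit : Real.exp (s₀*aa + LL*qq + LLL*qq) =
              Real.exp ((s₀*aa + LL*qq + LLL*qq) - 1) * Real.exp 1 := by
            rw [← Real.exp_add]; ring_nf
          rw [hsplit]
          have h := mul_le_mul_of_nonneg_left he2
            (Real.exp_pos ((s₀*aa + LL*qq + LLL*qq) - 1)).le
          linarith
        have e4 : Real.exp (A1*L - A2*LL + (δv-ε')*LLL) ≤
            Real.exp ((s₀*aa + LL*qq + LLL*qq) - 1) := by
          apply Real.exp_le_exp.2
          linarith
        linarith
      exact le_trans hmain (hfle _ (Real.exp_pos _))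
    -- UPPER BOUND
    have hexp_rpow : ∀ x y : ℝ, (Real.exp x) ^ y = Real.exp (x*y) := fun x y => by
      rw [Real.rpow_def_of_pos (Real.exp_pos x), Real.log_exp]
    have key_up : ∀ ε' : ℝ, 0 < ε' → ∀ᶠ t in atTop,
        f t (rhat t) ≤ Real.exp (A1 * Real.log t - A2 * Real.log (Real.log t)
          + (δv + ε') * Real.log (Real.log (Real.log t))) := by
      intro ε' hε'
      have h1aa : 0 < 1 - aa := by linarith
      set ε₂ : ℝ := ε'/(4*aa) with hε₂def
      have hε₂ : 0 < ε₂ := by rw [hε₂def]; positivity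
      have G6 : aa*ε₂ = ε'/4 := by
        rw [hε₂def]; field_simp [ne_of_gt haa0] <;> ring
      clear_value ε₂
      have hg2 : 0 < (1-aa)*ε₂/2 := by positivity
      -- helper constants for the eventual conditions
      set KK : ℝ := Real.log (C₀ + 2*(d:ℝ)*Real.exp 1 + 1) with hKKdef
      have hCpos : (0:ℝ) < C₀ + 2*(d:ℝ)*Real.exp 1 + 1 := by positivity
      have hKKexp : Real.exp KK = C₀ + 2*(d:ℝ)*Real.exp 1 + 1 := by
        rw [hKKdef, Real.exp_log hCpos]
      clear_value KK
      set c5' : ℝ := (β-1)/(γ + |δv| + ε₂ + 1) with hc5'def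
      have hXpos : 0 < γ + |δv| + ε₂ + 1 := by positivity
      have hc5' : 0 < c5' := by rw [hc5'def]; exact div_pos (by linarith) hXpos
      have hc5'bd : (γ + |δv| + ε₂)*c5' ≤ β - 1 := by
        rw [hc5'def, mul_div_assoc', div_le_iff₀ hXpos]
        have hstep : (β-1)*(γ + |δv| + ε₂) ≤ (β-1)*(γ + |δv| + ε₂ + 1) :=
          mul_le_mul_of_nonneg_left (by linarith) (by linarith)
        linarith
      clear_value c5'
      set c11 : ℝ := (A1/2)/(A2+1) with hc11def
      have hc11 : 0 < c11 := by rw [hc11def]; positivity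
      have hc11bd : A2*c11 ≤ A1/2 := by
        rw [hc11def, mul_div_assoc', div_le_iff₀ (by linarith : (0:ℝ) < A2+1)]
        linarith
      clear_value c11
      set c13 : ℝ := ((β-1)/4)/(γ+1) with hc13def
      have hc13 : 0 < c13 := by
        rw [hc13def]; exact div_pos (by linarith) (by linarith)
      have hc13bd : γ*c13 ≤ (β-1)/4 := by
        rw [hc13def, mul_div_assoc', div_le_iff₀ (by linarith : (0:ℝ) < γ+1)]
        linarith
      clear_value c13
      set cc8 : ℝ := (ε'/4)/(2*(e3+1)) with hcc8def
      have hcc8 : 0 < cc8 := by rw [hcc8def]; positivity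
      have hcc8bd : e3*(cc8*2) ≤ ε'/4 := by
        have h1 : cc8*(2*e3) ≤ cc8*(2*(e3+1)) :=
          mul_le_mul_of_nonneg_left (by linarith) hcc8.le
        have h2 : cc8*(2*(e3+1)) = ε'/4 := by
          rw [hcc8def, div_mul_cancel₀ _ (ne_of_gt (by positivity : (0:ℝ) < 2*(e3+1)))]
        linarith
      clear_value cc8
      set cc14 : ℝ := ((1-aa)*ε₂/2)/(2*(e3+1)) with hcc14def
      have hcc14 : 0 < cc14 := by rw [hcc14def]; positivity
      have hcc14bd : e3*(cc14*2) ≤ (1-aa)*ε₂/2 := by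
        have h1 : cc14*(2*e3) ≤ cc14*(2*(e3+1)) :=
          mul_le_mul_of_nonneg_left (by linarith) hcc14.le
        have h2 : cc14*(2*(e3+1)) = (1-aa)*ε₂/2 := by
          rw [hcc14def, div_mul_cancel₀ _ (ne_of_gt (by positivity : (0:ℝ) < 2*(e3+1)))]
        linarith
      clear_value cc14
      set K9 : ℝ := (qq*b + qq + 1)*(4/ε') with hK9def
      have hK9eq : (ε'/4)*K9 = qq*b + qq + 1 := by
        rw [hK9def]; field_simp [ne_of_gt hε']
      clear_value K9
      set K15 : ℝ := (qq*b + qq + |Real.log ((β-1)/2)| + 1)*(2/((1-aa)*ε₂)) with hK15def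
      have hK15eq : ((1-aa)*ε₂/2)*K15 = qq*b + qq + |Real.log ((β-1)/2)| + 1 := by
        rw [hK15def]; field_simp [ne_of_gt h1aa, ne_of_gt hε₂]
      clear_value K15
      set K12 : ℝ := (KK+1)*(2/A1) with hK12def
      have hK12eq : (A1/2)*K12 = KK+1 := by
        rw [hK12def]; field_simp [ne_of_gt hA10]
      clear_value K12
      set U0 : ℝ := (8*(2*qq+e3)+8)/(1-aa) with hU0def
      have hU08 : 8 ≤ U0 := by
        rw [hU0def, le_div_iff₀ h1aa]
        linarith [he30, hqq0, haa0]
      have hU0eq : (1-aa)*U0 = 8*(2*qq+e3)+8 := by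
        rw [hU0def, mul_comm, div_mul_cancel₀ _ (ne_of_gt h1aa)]
      clear_value U0
      have hLLL1t : Tendsto (fun t : ℝ => Real.log (Real.log (Real.log t)) + 1) atTop atTop :=
        tendsto_atTop_add_const_right atTop 1 hLLLt
      filter_upwards [hmax, eventually_ge_atTop (1:ℝ),
        hLt.eventually_ge_atTop 3,
        hLt.eventually_ge_atTop (qq/(1-aa)),
        hLt.eventually_ge_atTop (U0^2),
        hLt.eventually_ge_atTop (2*c₂),
        hLt.eventually_ge_atTop (4*c₂/(β-1)),
        hLt.eventually_ge_atTop K12,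
        hLLt.eventually_ge_atTop (max 3 b),
        hLLLt.eventually_ge_atTop 1,
        hLLLt.eventually_ge_atTop K9,
        hLLLt.eventually_ge_atTop K15,
        PA.ev_log_le hLt hc5',
        PA.ev_log_le hLt hc11,
        PA.ev_log_le hLt hc13,
        PA.ev_log_le hLLL1t hcc8,
        PA.ev_log_le hLLL1t hcc14]
        with t hmaxt ht1 hL3 hL16 hL17 hL18 hL13b hLK12 hLLm hLLL1 hLLLK9 hLLLK15
          hLLc5' hLLc11 hLLc13 hlll8 hlll14
      obtain ⟨hrhat, _⟩ := hmaxt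
      have ht0 : (0:ℝ) < t := by linarith
      set L := Real.log t with hLdef
      set LL := Real.log L with hLLdef
      set LLL := Real.log LL with hLLLdef
      clear_value L LL LLL
      have hLpos : (0:ℝ) < L := by linarith
      have hLL3 : 3 ≤ LL := le_trans (le_max_left _ _) hLLm
      have hLLb : b ≤ LL := le_trans (le_max_right _ _) hLLm
      have hLLpos : (0:ℝ) < LL := by linarith
      have hLLL0 : (0:ℝ) ≤ LLL := by linarith
      -- log(LLL+1) bounds
      have hlog8 : e3*Real.log (LLL+1) ≤ (ε'/4)*LLL := by
        have h1 : Real.log (LLL+1) ≤ cc8*(LLL+1) := hlll8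
        have h2 : LLL + 1 ≤ 2*LLL := by linarith
        have h3 : cc8*(LLL+1) ≤ cc8*(2*LLL) := mul_le_mul_of_nonneg_left (by linarith) hcc8.le
        have h4 : e3*Real.log (LLL+1) ≤ e3*(cc8*(2*LLL)) := by
          have h5 : Real.log (LLL+1) ≤ cc8*(2*LLL) := by linarith
          exact mul_le_mul_of_nonneg_left h5 he30
        have h6 : e3*(cc8*(2*LLL)) = (e3*(cc8*2))*LLL := by ring
        have h7 : (e3*(cc8*2))*LLL ≤ (ε'/4)*LLL :=
          mul_le_mul_of_nonneg_right hcc8bd hLLL0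
        linarith
      have hlog14 : e3*Real.log (LLL+1) ≤ ((1-aa)*ε₂/2)*LLL := by
        have h1 : Real.log (LLL+1) ≤ cc14*(LLL+1) := hlll14
        have h3 : cc14*(LLL+1) ≤ cc14*(2*LLL) := mul_le_mul_of_nonneg_left (by linarith) hcc14.le
        have h4 : e3*Real.log (LLL+1) ≤ e3*(cc14*(2*LLL)) := by
          have h5 : Real.log (LLL+1) ≤ cc14*(2*LLL) := by linarith
          exact mul_le_mul_of_nonneg_left h5 he30
        have h6 : e3*(cc14*(2*LLL)) = (e3*(cc14*2))*LLL := by ring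
        have h7 : (e3*(cc14*2))*LLL ≤ ((1-aa)*ε₂/2)*LLL :=
          mul_le_mul_of_nonneg_right hcc14bd hLLL0
        linarith
      have hE9 : qq*b + qq + 1 ≤ (ε'/4)*LLL := by
        linarith [mul_le_mul_of_nonneg_left hLLLK9 (by positivity : (0:ℝ) ≤ ε'/4), hK9eq]
      have hE15 : qq*b + qq + |Real.log ((β-1)/2)| + 1 ≤ ((1-aa)*ε₂/2)*LLL := by
        linarith [mul_le_mul_of_nonneg_left hLLLK15 hg2.le, hK15eq]
      have hE12 : KK + 1 ≤ (A1/2)*L := by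
        linarith [mul_le_mul_of_nonneg_left hLK12 (by positivity : (0:ℝ) ≤ A1/2), hK12eq]
      have hE11 : A2*LL ≤ (A1/2)*L := by
        have h1 : A2*LL ≤ A2*(c11*L) := by
          have := hLLc11; exact mul_le_mul_of_nonneg_left this hA20
        have h2 : (A2*c11)*L ≤ (A1/2)*L := mul_le_mul_of_nonneg_right hc11bd hLpos.le
        linarith
      have hE13 : γ*LL + c₂ ≤ ((β-1)/2)*L := by
        have h1 : γ*LL ≤ γ*(c13*L) := mul_le_mul_of_nonneg_left hLLc13 hγ0.le
        have h2 : (γ*c13)*L ≤ ((β-1)/4)*L := mul_le_mul_of_nonneg_right hc13bd hLpos.le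
        have h3 : c₂ ≤ ((β-1)/4)*L := by
          rw [div_le_iff₀ (by linarith : (0:ℝ) < β-1)] at hL13b
          linarith
        linarith
      -- ZB bounds
      have hZbig : KK + 1 ≤ A1*L - A2*LL + (δv+ε')*LLL := by
        have h1 : 0 ≤ (δv+ε')*LLL := mul_nonneg (by linarith) hLLL0
        linarith [hE11, hE12]
      -- sB and its log bounds
      set sB : ℝ := β*L - γ*LL + (δv+ε₂)*LLL with hsBdef
      clear_value sB
      have habs2' : δv + ε₂ ≤ |δv| + ε₂ := by linarith [le_abs_self δv]
      have hE5' : γ*LL + (|δv| + ε₂)*LLL ≤ (β-1)*L := by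
        have h1 : LLL ≤ LL := by rw [hLLLdef]; exact PA.log_le_self hLLpos
        have h2 : LL ≤ c5' * L := hLLc5'
        have h4 : (γ + |δv| + ε₂)*LL ≤ (γ + |δv| + ε₂)*(c5'*L) :=
          mul_le_mul_of_nonneg_left h2 (by linarith [abs_nonneg δv])
        have h5 : ((γ + |δv| + ε₂)*c5')*L ≤ (β-1)*L :=
          mul_le_mul_of_nonneg_right hc5'bd hLpos.le
        have h6 : (|δv| + ε₂)*LLL ≤ (|δv| + ε₂)*LL :=
          mul_le_mul_of_nonneg_left h1 (by linarith [abs_nonneg δv])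
        linarith
      have hsBL : L ≤ sB := by
        have h0 : 0 ≤ (δv+ε₂)*LLL := mul_nonneg (by linarith) hLLL0
        have h00 : 0 ≤ (|δv| + ε₂)*LLL := mul_nonneg (by linarith [abs_nonneg δv]) hLLL0
        rw [hsBdef]; linarith
      have hsB3 : 3 ≤ sB := le_trans hL3 hsBL
      have hsBpos : (0:ℝ) < sB := by linarith
      have hsB2β : sB ≤ 2*β*L := by
        have h1 : (δv+ε₂)*LLL ≤ (|δv| + ε₂)*LLL := mul_le_mul_of_nonneg_right habs2' hLLL0
        have h2 : 0 ≤ γ*LL := by positivity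
        rw [hsBdef]; linarith
      have hlogsBlow : LL ≤ Real.log sB := by
        rw [hLLdef]; exact Real.log_le_log hLpos hsBL
      have hlogsBup : Real.log sB ≤ LL + b := by
        have h1 : Real.log sB ≤ Real.log (2*β*L) := Real.log_le_log hsBpos hsB2β
        rw [show (2*β*L) = (2*β)*L by ring,
          Real.log_mul (by positivity) (ne_of_gt hLpos)] at h1
        rw [hbdef] at *
        linarith [h1]
      have hlsBpos : (0:ℝ) < Real.log sB := by linarith
      have hllsBlow : LLL ≤ Real.log (Real.log sB) := by
        rw [hLLLdef]; exact Real.log_le_log hLLpos hlogsBlow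
      have hllsBup : Real.log (Real.log sB) ≤ LLL + 1 := by
        have h1 : Real.log (Real.log sB) ≤ Real.log (LL + b) :=
          Real.log_le_log hlsBpos hlogsBup
        have h2 : Real.log (LL + b) ≤ Real.log LL + b/LL := PA.log_add_le hLLpos hb0.le
        have h3 : b/LL ≤ 1 := by rw [div_le_one hLLpos]; linarith
        rw [hLLLdef]; linarith
      have hllsBpos : (0:ℝ) < Real.log (Real.log sB) := by linarith
      -- sB - L - c₂ lower bound
      have hsBLc : ((β-1)/2)*L ≤ sB - c₂ - L := by
        have h0 : 0 ≤ (δv+ε₂)*LLL := mul_nonneg (by linarith) hLLL0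
        rw [hsBdef]; linarith
      have hsBLcpos : (0:ℝ) < sB - c₂ - L := by
        have h := mul_pos (show (0:ℝ) < (β-1)/2 by linarith) hLpos
        linarith
      have hlogsBLc : LL + Real.log ((β-1)/2) ≤ Real.log (sB - c₂ - L) := by
        have h1 : Real.log (((β-1)/2)*L) ≤ Real.log (sB - c₂ - L) :=
          Real.log_le_log (mul_pos (by linarith : (0:ℝ) < (β-1)/2) hLpos) hsBLc
        rw [Real.log_mul (ne_of_gt (by linarith : (0:ℝ) < (β-1)/2)) (ne_of_gt hLpos)] at h1
        linarith
      -- the inequality at sB (balance point)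
      have hidφ : (aa*sB + qq*LL + qq*LLL) - (sB - L + LL) = -((1-aa)*ε₂)*LLL := by
        rw [hsBdef]
        linear_combination (-L)*F10 + LL*F11 - LLL*F12
      have hφ : aa*sB + qq*(LL+b) + qq*(LLL+1) + e3*Real.log (LLL+1) ≤
          (sB - L) + (LL + Real.log ((β-1)/2)) := by
        have h1 : -|Real.log ((β-1)/2)| ≤ Real.log ((β-1)/2) := neg_abs_le _
        linarith [hlog14, hE15, hidφ]
      -- identity for the W bound (range (ii))
      have hidW : (aa*sB + qq*LL + qq*LLL) - (A1*L - A2*LL + (δv+ε')*LLL) =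
          -((3:ℝ)/4*ε')*LLL := by
        rw [hsBdef]
        linear_combination L*F1 + LL*F2 + LLL*F3 + LLL*G6
      -- now the pointwise bound
      set r : ℝ := rhat t with hrdef
      have hr0 : 0 < r := hrhat
      rw [hf]
      rcases le_or_gt r (Real.exp (Real.exp (Real.exp 1))) with hcase | hcase
      · -- small range
        have hterm := hC₀bd r hr0 hcase
        have hu : 0 < r/(2*(d:ℝ)*Real.exp 1*t) := by positivity
        have hrt : r/t = (2*(d:ℝ)*Real.exp 1) * (r/(2*(d:ℝ)*Real.exp 1*t)) := by
          field_simp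
        have hulog := PA.mul_log_ge_neg_one hu
        have h2de : (0:ℝ) < 2*(d:ℝ)*Real.exp 1 := by positivity
        have hpen2 : -(2*(d:ℝ)*Real.exp 1) ≤ r/t * Real.log (r/(2*(d:ℝ)*Real.exp 1*t)) := by
          rw [hrt]
          have h := mul_le_mul_of_nonneg_left hulog h2de.le
          linarith
        have hexpZ : C₀ + 2*(d:ℝ)*Real.exp 1 + 1 ≤
            Real.exp (A1*L - A2*LL + (δv+ε')*LLL) := by
          rw [← hKKexp]
          apply Real.exp_le_exp.2
          linarith
        linarith
      · -- r > rmin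
        have hrmin : Real.exp (Real.exp (Real.exp 1)) < r := hcase
        have hlogrmin : Real.exp (Real.exp 1) ≤ Real.log r := by
          have := Real.log_le_log (Real.exp_pos _) hrmin.le
          rwa [Real.log_exp] at this
        have hlr0 : (0:ℝ) < Real.log r := lt_of_lt_of_le (Real.exp_pos _) hlogrmin
        have hllrmin : Real.exp 1 ≤ Real.log (Real.log r) := by
          have := Real.log_le_log (Real.exp_pos _) hlogrmin
          rwa [Real.log_exp] at this
        have hllr0 : (0:ℝ) < Real.log (Real.log r) := lt_of_lt_of_le (Real.exp_pos _) hllrmin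
        have hlllr1 : 1 ≤ Real.log (Real.log (Real.log r)) := by
          have := Real.log_le_log (Real.exp_pos _) hllrmin
          rwa [Real.log_exp] at this
        rcases le_or_gt r (Real.exp sB) with hcase2 | hcase2
        · -- middle-small range : rmin < r ≤ exp sB  (range ii)
          have hlogr_le : Real.log r ≤ sB := by
            have := Real.log_le_log hr0 hcase2
            rwa [Real.log_exp] at this
          have hllr_le : Real.log (Real.log r) ≤ Real.log sB :=
            Real.log_le_log hlr0 hlogr_le
          have hlllr_le : Real.log (Real.log (Real.log r)) ≤ Real.log (Real.log sB) :=
            Real.log_le_log hllr0 hllr_le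
          have f1 : r ^ aa ≤ Real.exp (sB*aa) := by
            rw [← hexp_rpow]
            exact Real.rpow_le_rpow hr0.le hcase2 haa0.le
          have f2 : Real.log r ^ qq ≤ Real.exp ((LL+b)*qq) := by
            rw [Real.rpow_def_of_pos hlr0]
            apply Real.exp_le_exp.2
            have h1 : Real.log (Real.log r) ≤ LL + b := le_trans hllr_le hlogsBup
            exact mul_le_mul_of_nonneg_right h1 hqq0.le
          have f3 : Real.log (Real.log r) ^ qq ≤ Real.exp ((LLL+1)*qq) := by
            rw [Real.rpow_def_of_pos hllr0]
            apply Real.exp_le_exp.2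
            have h1 : Real.log (Real.log (Real.log r)) ≤ LLL + 1 := le_trans hlllr_le hllsBup
            exact mul_le_mul_of_nonneg_right h1 hqq0.le
          have f4 : Real.log (Real.log (Real.log r)) ^ e3 ≤ Real.exp (Real.log (LLL+1)*e3) := by
            rw [Real.rpow_def_of_pos (by linarith : (0:ℝ) < Real.log (Real.log (Real.log r)))]
            apply Real.exp_le_exp.2
            have h1 : Real.log (Real.log (Real.log (Real.log r))) ≤ Real.log (LLL+1) := by
              apply Real.log_le_log (by linarith)
              exact le_trans hlllr_le hllsBup
            exact mul_le_mul_of_nonneg_right h1 he30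
          have hterm : r ^ aa * Real.log r ^ qq * Real.log (Real.log r) ^ qq *
              Real.log (Real.log (Real.log r)) ^ e3 ≤
              Real.exp (sB*aa + (LL+b)*qq + (LLL+1)*qq + Real.log (LLL+1)*e3) := by
            rw [Real.exp_add, Real.exp_add, Real.exp_add]
            have n1 : (0:ℝ) ≤ r ^ aa := Real.rpow_nonneg hr0.le _
            have n2 : (0:ℝ) ≤ Real.log r ^ qq := Real.rpow_nonneg hlr0.le _
            have n3 : (0:ℝ) ≤ Real.log (Real.log r) ^ qq := Real.rpow_nonneg hllr0.le _
            have n4 : (0:ℝ) ≤ Real.log (Real.log (Real.log r)) ^ e3 :=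
              Real.rpow_nonneg (by linarith) _
            apply mul_le_mul _ f4 n4 (by positivity)
            apply mul_le_mul _ f3 n3 (by positivity)
            exact mul_le_mul f1 f2 n2 (Real.exp_pos _).le
          -- penalty bounded below
          have hu : 0 < r/(2*(d:ℝ)*Real.exp 1*t) := by positivity
          have hrt : r/t = (2*(d:ℝ)*Real.exp 1) * (r/(2*(d:ℝ)*Real.exp 1*t)) := by
            field_simp
          have hulog := PA.mul_log_ge_neg_one hu
          have h2de : (0:ℝ) < 2*(d:ℝ)*Real.exp 1 := by positivity
          have hpen2 : -(2*(d:ℝ)*Real.exp 1) ≤ r/t * Real.log (r/(2*(d:ℝ)*Real.exp 1*t)) := by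
            rw [hrt]
            have h := mul_le_mul_of_nonneg_left hulog h2de.le
            linarith
          -- W + 1 ≤ ZB
          have hWZ : (sB*aa + (LL+b)*qq + (LLL+1)*qq + Real.log (LLL+1)*e3) + 1 ≤
              A1*L - A2*LL + (δv+ε')*LLL := by
            have h0 : (0:ℝ) ≤ (ε'/4)*LLL := mul_nonneg (by positivity) hLLL0
            linarith [hidW, hlog8, hE9]
          have hexpW : Real.exp (sB*aa + (LL+b)*qq + (LLL+1)*qq + Real.log (LLL+1)*e3) ≤
              Real.exp ((A1*L - A2*LL + (δv+ε')*LLL) - 1) := by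
            apply Real.exp_le_exp.2; linarith
          have hexpZ1 : 2*(d:ℝ)*Real.exp 1 ≤
              Real.exp ((A1*L - A2*LL + (δv+ε')*LLL) - 1) := by
            have h1 : KK ≤ (A1*L - A2*LL + (δv+ε')*LLL) - 1 := by linarith
            have h2 := Real.exp_le_exp.2 h1
            rw [hKKexp] at h2
            linarith
          have hsum : Real.exp ((A1*L - A2*LL + (δv+ε')*LLL) - 1) * 2 ≤
              Real.exp (A1*L - A2*LL + (δv+ε')*LLL) := by
            have hsplit : Real.exp (A1*L - A2*LL + (δv+ε')*LLL) =
                Real.exp ((A1*L - A2*LL + (δv+ε')*LLL) - 1) * Real.exp 1 := by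
              rw [← Real.exp_add]; ring_nf
            rw [hsplit]
            have h := mul_le_mul_of_nonneg_left he2
              (Real.exp_pos ((A1*L - A2*LL + (δv+ε')*LLL) - 1)).le
            linarith
          linarith
        · -- large ranges : r > exp sB
          set sv : ℝ := Real.log r with hsvdef
          have hssB : sB ≤ sv := by
            rw [hsvdef]
            have h := Real.log_le_log (Real.exp_pos _) hcase2.le
            rwa [Real.log_exp] at h
          have hsv3 : 3 ≤ sv := le_trans hsB3 hssB
          have hsvpos : (0:ℝ) < sv := by linarith
          have hlogsv3 : 3 ≤ Real.log sv := by
            have h1 : Real.log sB ≤ Real.log sv := Real.log_le_log hsBpos hssB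
            linarith [hlogsBlow]
          have hlsv0 : (0:ℝ) < Real.log sv := by linarith
          have hllsv0 : (0:ℝ) < Real.log (Real.log sv) := by
            have h1 : Real.log 3 ≤ Real.log (Real.log sv) :=
              Real.log_le_log (by norm_num) hlogsv3
            have h2 : (0:ℝ) < Real.log 3 := Real.log_pos (by norm_num)
            linarith
          have hrexp : r = Real.exp sv := by rw [hsvdef, Real.exp_log hr0]
          have e1 : r ^ aa = Real.exp (sv*aa) := by rw [hrexp, hexp_rpow]
          have e2 : sv ^ qq = Real.exp (Real.log sv * qq) := Real.rpow_def_of_pos hsvpos qq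
          have e3f : Real.log sv ^ qq = Real.exp (Real.log (Real.log sv) * qq) :=
            Real.rpow_def_of_pos hlsv0 qq
          have e4 : Real.log (Real.log sv) ^ e3 =
              Real.exp (Real.log (Real.log (Real.log sv)) * e3) :=
            Real.rpow_def_of_pos hllsv0 e3
          have e5 : r / t = Real.exp (sv - L) := by
            rw [hrexp, hLdef, Real.exp_sub, Real.exp_log ht0]
          have e6 : Real.log (r / (2*(d:ℝ)*Real.exp 1*t)) = sv - c₂ - L := by
            rw [Real.log_div (ne_of_gt hr0) (by positivity),
              Real.log_mul (by positivity) (ne_of_gt ht0), hc₂def, hLdef, hsvdef]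
            ring
          rw [e1, e2, e3f, e4, e5, e6, ← Real.exp_add, ← Real.exp_add, ← Real.exp_add]
          -- it suffices to show the penalty dominates the main term
          rcases le_or_gt sv (2*β*L) with hcase3 | hcase3
          · -- middle range : sB ≤ sv ≤ 2βL
            have hlogsv_up : Real.log sv ≤ LL + b := by
              have h1 : Real.log sv ≤ Real.log (2*β*L) := Real.log_le_log hsvpos hcase3
              rw [show (2*β*L) = (2*β)*L by ring,
                Real.log_mul (by positivity) (ne_of_gt hLpos)] at h1
              rw [hbdef] at *
              linarith [h1]
            have hllsv_up : Real.log (Real.log sv) ≤ LLL + 1 := by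
              have h1 : Real.log (Real.log sv) ≤ Real.log (LL + b) :=
                Real.log_le_log hlsv0 hlogsv_up
              have h2 : Real.log (LL + b) ≤ Real.log LL + b/LL := PA.log_add_le hLLpos hb0.le
              have h3 : b/LL ≤ 1 := by rw [div_le_one hLLpos]; linarith
              rw [hLLLdef]; linarith
            have hlllsv_up : Real.log (Real.log (Real.log sv)) ≤ Real.log (LLL+1) :=
              Real.log_le_log hllsv0 hllsv_up
            have hshift0 : (0:ℝ) ≤ sv - sB := by linarith
            have hlog_shift : Real.log sv ≤ Real.log sB + (sv - sB)/sB := by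
              have h := PA.log_add_le hsBpos hshift0
              rw [show sB + (sv - sB) = sv by ring] at h
              exact h
            have hE16 : qq ≤ (1-aa)*sB := by
              rw [div_le_iff₀ h1aa] at hL16
              have h := mul_le_mul_of_nonneg_left hsBL h1aa.le
              linarith
            have hqdiv : qq*((sv - sB)/sB) ≤ (1-aa)*(sv - sB) := by
              have hc : sB*((sv - sB)/sB) = sv - sB := by field_simp
              have hd0 : (0:ℝ) ≤ (sv - sB)/sB := div_nonneg hshift0 hsBpos.le
              have h1 := mul_le_mul_of_nonneg_right hE16 hd0
              have hc2 : (1-aa)*(sB*((sv - sB)/sB)) = (1-aa)*(sv - sB) := by rw [hc]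
              linarith
            have hpos2 : (0:ℝ) < sv - c₂ - L := by linarith [hsBLcpos]
            have hlogmono : Real.log (sB - c₂ - L) ≤ Real.log (sv - c₂ - L) :=
              Real.log_le_log (by linarith [hsBLcpos]) (by linarith)
            have hT : sv*aa + Real.log sv*qq + Real.log (Real.log sv)*qq
                + Real.log (Real.log (Real.log sv))*e3 ≤ (sv - L) + Real.log (sv - c₂ - L) := by
              have m1 : Real.log sv*qq ≤ (Real.log sB + (sv - sB)/sB)*qq :=
                mul_le_mul_of_nonneg_right hlog_shift hqq0.le
              have m2 : Real.log (Real.log sv)*qq ≤ (LLL+1)*qq :=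
                mul_le_mul_of_nonneg_right hllsv_up hqq0.le
              have m3 : Real.log (Real.log (Real.log sv))*e3 ≤ Real.log (LLL+1)*e3 :=
                mul_le_mul_of_nonneg_right hlllsv_up he30
              have m4 : Real.log sB*qq ≤ (LL+b)*qq :=
                mul_le_mul_of_nonneg_right hlogsBup hqq0.le
              linarith [hφ, hlogsBLc, hlogmono, hqdiv]
            have hexpT : Real.exp (sv*aa + Real.log sv*qq + Real.log (Real.log sv)*qq
                + Real.log (Real.log (Real.log sv))*e3) ≤ Real.exp (sv - L) * (sv - c₂ - L) := by
              calc Real.exp (sv*aa + Real.log sv*qq + Real.log (Real.log sv)*qq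
                  + Real.log (Real.log (Real.log sv))*e3)
                  ≤ Real.exp ((sv - L) + Real.log (sv - c₂ - L)) := Real.exp_le_exp.2 hT
                _ = Real.exp (sv - L) * (sv - c₂ - L) := by
                    rw [Real.exp_add, Real.exp_log hpos2]
            linarith [hexpT, (Real.exp_pos (A1*L - A2*LL + (δv+ε')*LLL)).le]
          · -- far range : sv > 2βL
            have hllsv_le : Real.log (Real.log sv) ≤ Real.log sv := PA.log_le_self hlsv0
            have hlllsv_le : Real.log (Real.log (Real.log sv)) ≤ Real.log sv :=
              le_trans (PA.log_le_self hllsv0) hllsv_le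
            have h2L : 2*L ≤ (1-aa)*sv := by
              have h1 : (1-aa)*(2*β*L) ≤ (1-aa)*sv :=
                mul_le_mul_of_nonneg_left hcase3.le h1aa.le
              have h2 : (1-aa)*(2*β*L) = 2*L := by linear_combination (2*L)*F10
              linarith
            have haasv : (0:ℝ) ≤ aa*sv := mul_nonneg haa0.le hsvpos.le
            have hLsv : L ≤ sv/2 := by linarith
            have hc₂sv : c₂ ≤ sv/4 := by linarith [hL18]
            have hpenlow : sv/4 ≤ sv - c₂ - L := by linarith
            have hpos2 : (0:ℝ) < sv - c₂ - L := by linarith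
            have hexp2le : Real.exp (Real.log sv - 2) ≤ sv/4 := by
              have hx : Real.exp (Real.log sv - 2) = sv / Real.exp 2 := by
                rw [Real.exp_sub, Real.exp_log hsvpos]
              have he4 : (4:ℝ) ≤ Real.exp 2 := by
                have h1 : Real.exp 2 = Real.exp 1 * Real.exp 1 := by
                  rw [← Real.exp_add]; norm_num
                have h2 := mul_le_mul he2 he2 (by norm_num) (le_trans (by norm_num) he2)
                linarith
              rw [hx]
              exact div_le_div_of_nonneg_left hsvpos.le (by norm_num) he4
            have hu2 : sv ^ (1/2:ℝ) * sv ^ (1/2:ℝ) = sv := by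
              rw [← Real.rpow_add hsvpos]; norm_num
            have hu0 : (0:ℝ) ≤ sv ^ (1/2:ℝ) := Real.rpow_nonneg hsvpos.le _
            have huU0 : U0 ≤ sv ^ (1/2:ℝ) := by
              have h1 : U0^2 ≤ sv := le_trans hL17 (le_trans hsBL hssB)
              have h2 : ((U0^2 : ℝ)) ^ (1/2:ℝ) ≤ sv ^ (1/2:ℝ) :=
                Real.rpow_le_rpow (by positivity) h1 (by norm_num)
              have h3 : ((U0^2 : ℝ)) ^ (1/2:ℝ) = U0 := by
                rw [← Real.rpow_natCast U0 2, ← Real.rpow_mul (by linarith : (0:ℝ) ≤ U0)]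
                norm_num
              linarith
            have hlogsv2 : Real.log sv ≤ 2*sv ^ (1/2:ℝ) := PA.log_le_two_rpow hsvpos.le
            have hKnn : (0:ℝ) ≤ 2*qq + e3 := by linarith
            have hu8 : (8:ℝ) ≤ sv ^ (1/2:ℝ) := le_trans hU08 huU0
            have hKu0 : (0:ℝ) ≤ (2*qq+e3)*(sv ^ (1/2:ℝ)) := mul_nonneg hKnn hu0
            have hKbound : (2*qq+e3)*Real.log sv + 2 ≤ (1-aa)*sv/2 := by
              have p1 : (2*qq+e3)*Real.log sv ≤ (2*qq+e3)*(2*sv ^ (1/2:ℝ)) :=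
                mul_le_mul_of_nonneg_left hlogsv2 hKnn
              have p2 : (1-aa)*(U0*(sv ^ (1/2:ℝ))) ≤ (1-aa)*((sv ^ (1/2:ℝ))*(sv ^ (1/2:ℝ))) :=
                mul_le_mul_of_nonneg_left (mul_le_mul_of_nonneg_right huU0 hu0) h1aa.le
              have p3 : (1-aa)*((sv ^ (1/2:ℝ))*(sv ^ (1/2:ℝ))) = (1-aa)*sv := by rw [hu2]
              have p4 : (1-aa)*(U0*(sv ^ (1/2:ℝ))) = (8*(2*qq+e3)+8)*(sv ^ (1/2:ℝ)) := by
                rw [show (1-aa)*(U0*(sv ^ (1/2:ℝ))) = ((1-aa)*U0)*(sv ^ (1/2:ℝ)) by ring, hU0eq]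
              linarith
            have hT : sv*aa + Real.log sv*qq + Real.log (Real.log sv)*qq
                + Real.log (Real.log (Real.log sv))*e3 ≤ (sv - L) + Real.log (sv - c₂ - L) := by
              have m2 : Real.log (Real.log sv)*qq ≤ Real.log sv*qq :=
                mul_le_mul_of_nonneg_right hllsv_le hqq0.le
              have m3 : Real.log (Real.log (Real.log sv))*e3 ≤ Real.log sv*e3 :=
                mul_le_mul_of_nonneg_right hlllsv_le he30
              have hloglb : Real.log sv - 2 ≤ Real.log (sv - c₂ - L) := by
                have h1 : Real.log (Real.exp (Real.log sv - 2)) ≤ Real.log (sv - c₂ - L) :=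
                  Real.log_le_log (Real.exp_pos _) (by linarith)
                rwa [Real.log_exp] at h1
              linarith [m2, m3, hKbound, h2L, hlsv0.le, hloglb]
            have hexpT : Real.exp (sv*aa + Real.log sv*qq + Real.log (Real.log sv)*qq
                + Real.log (Real.log (Real.log sv))*e3) ≤ Real.exp (sv - L) * (sv - c₂ - L) := by
              calc Real.exp (sv*aa + Real.log sv*qq + Real.log (Real.log sv)*qq
                  + Real.log (Real.log (Real.log sv))*e3)
                  ≤ Real.exp ((sv - L) + Real.log (sv - c₂ - L)) := Real.exp_le_exp.2 hT
                _ = Real.exp (sv - L) * (sv - c₂ - L) := by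
                    rw [Real.exp_add, Real.exp_log hpos2]
            linarith [hexpT, (Real.exp_pos (A1*L - A2*LL + (δv+ε')*LLL)).le]

    -- ASSEMBLY
    rw [Metric.tendsto_nhds]
    intro ε hε
    filter_upwards [key_low (ε/2) (by positivity), key_up (ε/2) (by positivity),
      hLLLt.eventually_ge_atTop 1] with t hlo hup hLLL1
    have hM0 : 0 < f t (rhat t) := lt_of_lt_of_le (Real.exp_pos _) hlo
    have hLLL0 : (0:ℝ) < Real.log (Real.log (Real.log t)) := by linarith
    have h1 : A1 * Real.log t - A2 * Real.log (Real.log t)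
        + (δv - ε/2) * Real.log (Real.log (Real.log t)) ≤ Real.log (f t (rhat t)) := by
      have := Real.log_le_log (Real.exp_pos _) hlo
      rwa [Real.log_exp] at this
    have h2 : Real.log (f t (rhat t)) ≤ A1 * Real.log t - A2 * Real.log (Real.log t)
        + (δv + ε/2) * Real.log (Real.log (Real.log t)) := by
      have := Real.log_le_log hM0 hup
      rwa [Real.log_exp] at this
    rw [Real.dist_eq]
    have hnum1 : (Real.log (f t (rhat t)) - A1 * Real.log t + A2 * Real.log (Real.log t)) /
        Real.log (Real.log (Real.log t)) - δv ≤ ε/2 := by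
      rw [sub_le_iff_le_add, div_le_iff₀ hLLL0]
      linarith [h2]
    have hnum2 : -(ε/2) ≤ (Real.log (f t (rhat t)) - A1 * Real.log t
        + A2 * Real.log (Real.log t)) / Real.log (Real.log (Real.log t)) - δv := by
      rw [le_sub_iff_add_le, le_div_iff₀ hLLL0]
      linarith [h1]
    have : |(Real.log (f t (rhat t)) - A1 * Real.log t + A2 * Real.log (Real.log t)) /
        Real.log (Real.log (Real.log t)) - δv| ≤ ε/2 := abs_le.2 ⟨hnum2, hnum1⟩
    linarith [this]
  · -- contradiction case : the supremum is infinite, no maximizer can exist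
    exfalso
    push_neg at he3
    obtain ⟨t, ⟨hrh, hmaxt⟩, ht1⟩ := (hmax.and (eventually_ge_atTop (1:ℝ))).exists
    have ht0 : (0:ℝ) < t := by linarith
    set s : ℝ := -(1/α + η) with hsdef
    have hs : 0 < s := by rw [hsdef]; linarith
    set B : ℝ := f t (rhat t) with hBdef
    set P : ℝ := Real.exp (Real.exp (Real.exp 1)) *
      (Real.exp (Real.exp 1) + |Real.log (2 * d * Real.exp 1 * t)|) with hPdef
    have hP : 0 ≤ P := by positivity
    set m : ℝ := max 1 ((|B| + P + 1)/s) with hmdef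
    have hm1 : 1 ≤ m := le_max_left _ _
    have hm2 : (|B| + P + 1)/s ≤ m := le_max_right _ _
    have hms : |B| + P + 1 ≤ m * s := by
      rw [div_le_iff₀ hs] at hm2; linarith
    set em : ℝ := Real.exp (-m) with hemdef
    have hem0 : 0 < em := Real.exp_pos _
    have hem1 : em ≤ 1 := by
      rw [hemdef, Real.exp_le_one_iff]; linarith
    set r : ℝ := Real.exp (Real.exp (Real.exp em)) with hrdef
    have hr0 : 0 < r := Real.exp_pos _
    have hlr : Real.log r = Real.exp (Real.exp em) := by rw [hrdef, Real.log_exp]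
    have hllr : Real.log (Real.log r) = Real.exp em := by rw [hlr, Real.log_exp]
    have hlllr : Real.log (Real.log (Real.log r)) = em := by rw [hllr, Real.log_exp]
    have hterm : Real.exp (m * s) ≤ r ^ ((d:ℝ)/α) * (Real.log r) ^ (1/α) *
        (Real.log (Real.log r)) ^ (1/α) * (Real.log (Real.log (Real.log r))) ^ (1/α + η) := by
      have f1 : (1:ℝ) ≤ r ^ ((d:ℝ)/α) :=
        Real.one_le_rpow (by rw [hrdef]; exact Real.one_le_exp (by positivity)) (by positivity)
      have f2 : (1:ℝ) ≤ (Real.log r) ^ (1/α) :=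
        Real.one_le_rpow (by rw [hlr]; exact Real.one_le_exp (by positivity)) (by positivity)
      have f3 : (1:ℝ) ≤ (Real.log (Real.log r)) ^ (1/α) :=
        Real.one_le_rpow (by rw [hllr]; exact Real.one_le_exp hem0.le) (by positivity)
      have f4 : (Real.log (Real.log (Real.log r))) ^ (1/α + η) = Real.exp (m * s) := by
        rw [hlllr, hemdef, Real.rpow_def_of_pos (Real.exp_pos _), Real.log_exp]
        congr 1
        rw [hsdef]; ring
      calc Real.exp (m*s) = 1 * 1 * 1 * Real.exp (m*s) := by ring
        _ ≤ r ^ ((d:ℝ)/α) * (Real.log r) ^ (1/α) *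
            (Real.log (Real.log r)) ^ (1/α) * Real.exp (m*s) := by
            have := Real.exp_pos (m*s)
            apply mul_le_mul_of_nonneg_right _ this.le
            have g1 : (1:ℝ)*1 ≤ r ^ ((d:ℝ)/α) * Real.log r ^ (1/α) :=
              mul_le_mul f1 f2 zero_le_one (le_trans zero_le_one f1)
            have g2 : (1:ℝ)*1 ≤ (r ^ ((d:ℝ)/α) * Real.log r ^ (1/α)) *
                Real.log (Real.log r) ^ (1/α) :=
              mul_le_mul (by linarith) f3 zero_le_one (by linarith)
            linarith
        _ = _ := by rw [f4]
    have hpen : |r / t * Real.log (r / (2 * d * Real.exp 1 * t))| ≤ P := by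
      have h1 : r / t ≤ Real.exp (Real.exp (Real.exp 1)) := by
        have : r ≤ Real.exp (Real.exp (Real.exp 1)) := by
          rw [hrdef]
          exact Real.exp_le_exp.2 (Real.exp_le_exp.2 (Real.exp_le_exp.2 hem1))
        calc r / t ≤ r := div_le_self hr0.le ht1
          _ ≤ _ := this
      have h2 : |Real.log (r / (2 * d * Real.exp 1 * t))| ≤
          Real.exp (Real.exp 1) + |Real.log (2 * d * Real.exp 1 * t)| := by
        rw [Real.log_div (ne_of_gt hr0) (by positivity)]
        have h3 : Real.log r ≤ Real.exp (Real.exp 1) := by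
          rw [hlr]; exact Real.exp_le_exp.2 (Real.exp_le_exp.2 hem1)
        have h4 : 0 ≤ Real.log r := by rw [hlr]; positivity
        calc |Real.log r - Real.log (2 * d * Real.exp 1 * t)|
            ≤ |Real.log r| + |Real.log (2 * d * Real.exp 1 * t)| := abs_sub _ _
          _ ≤ Real.exp (Real.exp 1) + |Real.log (2 * d * Real.exp 1 * t)| := by
              rw [abs_of_nonneg h4]; linarith
      rw [hPdef, abs_mul]
      apply mul_le_mul _ h2 (abs_nonneg _) (by positivity)
      rw [abs_of_nonneg (by positivity : (0:ℝ) ≤ r / t)]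
      exact h1
    have hfr := hmaxt r hr0
    rw [hf t r] at hfr
    have hexp_ms : 1 + (|B| + P + 1) ≤ Real.exp (m * s) := by
      have := Real.add_one_le_exp (m*s)
      linarith
    have hBB := le_abs_self B
    have hpen' : r / t * Real.log (r / (2 * d * Real.exp 1 * t)) ≤ P := le_of_abs_le hpen
    linarith
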